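/- With the same setup (L_θ(s,a) = Q⋆(s,a) − γ V⋆(f_θ(s,a)), terminal cost V⋆, Bellman equation V⋆(s) = min_a Q⋆(s,a)), the MPC action-value function Q_θ(s,a) — defined as the optimal value of the N-horizon problem with the first action constrained to equal a — satisfies Q_θ(s,a) = Q⋆(s,a) for all s and a. -/
import Mathlib


/-- `VM fθ Lθ Vstar γ M` : the optimal M-step cost-to-go under model `fθ` with
stage cost `Lθ` and terminal cost `Vstar`. -/
noncomputable def VM {S A : Type*} [Fintype A] [Nonempty A]
    (fθ : S → A → S) (Lθ : S → A → ℝ) (Vstar : S → ℝ) (γ : ℝ) : ℕ → S → ℝ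
  | 0 => Vstar
  | M + 1 => fun s =>
      Finset.univ.inf' Finset.univ_nonempty
        (fun a => Lθ s a + γ * VM fθ Lθ Vstar γ M (fθ s a))

/-- the MPC action-value function
Q_θ(s,a) = L_θ(s,a) + γ V_θ^{N−1}(f_θ(s,a)) satisfies Q_θ(s,a) = Q⋆(s,a)
for all s, a (for every horizon N ≥ 1, i.e. every M = N − 1). -/
theorem stmt_2 {S A : Type*} [Fintype A] [Nonempty A]
    (fθ : S → A → S) (γ : ℝ) (hγ0 : 0 < γ) (hγ1 : γ ≤ 1)
    (Vstar : S → ℝ) (Qstar : S → A → ℝ)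
    (hV : ∀ s : S, Vstar s = Finset.univ.inf' Finset.univ_nonempty (fun a => Qstar s a))
    (Lθ : S → A → ℝ)
    (hLθ : ∀ s a, Lθ s a = Qstar s a - γ * Vstar (fθ s a))
    (M : ℕ) :
    ∀ (s : S) (a : A),
      Lθ s a + γ * VM fθ Lθ Vstar γ M (fθ s a) = Qstar s a := by
  have key : ∀ (M : ℕ) (s : S), VM fθ Lθ Vstar γ M s = Vstar s := by
    intro M
    induction M with
    | zero => intro s; rfl
    | succ n ih =>
      intro s
      show Finset.univ.inf' Finset.univ_nonempty
        (fun a => Lθ s a + γ * VM fθ Lθ Vstar γ n (fθ s a)) = Vstar s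
      rw [hV s]
      congr 1
      funext a
      rw [ih (fθ s a), hLθ s a]
      ring
  intro s a
  rw [key M (fθ s a), hLθ s a]
  ring
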